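/- Fix an integer d ≥ 3. There exist constants c₀ > 0 and C (depending only on d) such that for every z ∈ ℂ⁺, every integer ℓ ≥ 1, and every Δ ∈ ℂ with ℓ·|Δ − m_sc(z)| ≤ c₀, the matrices defining X_ℓ(Δ,z) and Y_ℓ(Δ,z) are invertible and: |X_ℓ(Δ,z) − m_d(z) − (d/(d−1))·m_d(z)²·m_sc(z)^{2ℓ}·(Δ − m_sc(z))| ≤ C·ℓ·|Δ − m_sc(z)|², and |Y_ℓ(Δ,z) − m_sc(z) − m_sc(z)^{2ℓ+2}·(Δ − m_sc(z)) − m_sc(z)^{2ℓ+3}·((1 − m_sc(z)^{2ℓ+2})/(1 − m_sc(z)²))·(Δ − m_sc(z))²| ≤ C·ℓ²·|Δ − m_sc(z)|³. -/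

import Mathlib

open scoped Classical

noncomputable section

namespace Paper

/-- The degree of a vertex `v` in `G`. -/
def deg {V : Type} (G : SimpleGraph V) (v : V) : ℕ :=
  Nat.card {u : V // G.Adj v u}

/-- `G` is a `d`-regular graph. -/
def IsRegular {V : Type} (d : ℕ) (G : SimpleGraph V) : Prop :=
  ∀ v, deg G v = d

/-- The excess of a finite graph: #edges - #vertices + #components. -/
def excess {V : Type} (G : SimpleGraph V) : ℤ :=
  (Nat.card G.edgeSet : ℤ) - (Nat.card V : ℤ) + (Nat.card G.ConnectedComponent : ℤ)

/-- The set of vertices at graph distance at most `R` from the set `S`. -/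
def ball {V : Type} (G : SimpleGraph V) (S : Set V) (R : ℝ) : Set V :=
  {v | ∃ u ∈ S, ∃ w : G.Walk u v, (w.length : ℝ) ≤ R}

/-- There is a path between `u` and `v` of length at most `R`. -/
def distLE {V : Type} (G : SimpleGraph V) (u v : V) (R : ℝ) : Prop :=
  ∃ w : G.Walk u v, (w.length : ℝ) ≤ R

/-- The normalized adjacency matrix `A/√(d-1)`, over `ℂ`. -/
def normAdj {V : Type} (d : ℕ) (G : SimpleGraph V) : Matrix V V ℂ :=
  Matrix.of fun i j => if G.Adj i j then ((Real.sqrt ((d : ℝ) - 1) : ℂ))⁻¹ else 0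

/-- The normalized adjacency matrix `A/√(d-1)`, over `ℝ`. -/
def normAdjR {V : Type} (d : ℕ) (G : SimpleGraph V) : Matrix V V ℝ :=
  Matrix.of fun i j => if G.Adj i j then (Real.sqrt ((d : ℝ) - 1))⁻¹ else 0

/-- The Green's function `(H - z)⁻¹`. -/
def green {V : Type} [Fintype V] [DecidableEq V] (d : ℕ) (G : SimpleGraph V) (z : ℂ) :
    Matrix V V ℂ :=
  (normAdj d G - z • (1 : Matrix V V ℂ))⁻¹

/-- The Stieltjes transform `m_N(z) = Tr G(z)/N`. -/
def mN {V : Type} [Fintype V] [DecidableEq V] (d : ℕ) (G : SimpleGraph V) (z : ℂ) : ℂ :=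
  (Nat.card V : ℂ)⁻¹ * Matrix.trace (green d G z)

/-- `m_sc(z)`: the root of `m² + zm + 1 = 0` with positive imaginary part. -/
def mSC (z : ℂ) : ℂ :=
  if h : ∃ m : ℂ, m ^ 2 + z * m + 1 = 0 ∧ 0 < m.im then h.choose else 0

/-- `m_d(z) = (-z - d m_sc(z)/(d-1))⁻¹`. -/
def mD (d : ℕ) (z : ℂ) : ℂ :=
  (-z - (d : ℂ) * mSC z / ((d : ℂ) - 1))⁻¹

/-- `κ(z) = min(|Re z - 2|, |Re z + 2|)`. -/
def kappa (z : ℂ) : ℝ :=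
  min |z.re - 2| |z.re + 2|

/-- The matrix `H - z - Σ_v ((d - g v - deg v)/(d-1)) Δ e_vv` defining the
extension of `(G, g)` with weight `Δ`. -/
def extMatrix {V : Type} [Fintype V] [DecidableEq V] (d : ℕ) (G : SimpleGraph V)
    (g : V → ℕ) (Δ z : ℂ) : Matrix V V ℂ :=
  normAdj d G - z • (1 : Matrix V V ℂ) -
    Matrix.diagonal fun v => (((d : ℂ) - (g v : ℂ) - (deg G v : ℂ)) / ((d : ℂ) - 1)) * Δ

/-- The Green's function of the extension of `(G, g)` with weight `Δ`. -/
def extGreen {V : Type} [Fintype V] [DecidableEq V] (d : ℕ) (G : SimpleGraph V)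
    (g : V → ℕ) (Δ z : ℂ) : Matrix V V ℂ :=
  (extMatrix d G g Δ z)⁻¹

/-- Entry `(i,j)` of the Green's function of the extension with weight `Δ` of the
ball `B_R(S, G)`, the ball carrying the deficit function inherited from the ambient
deficit function `g0`. -/
def ballGreen {V : Type} [Fintype V] [DecidableEq V] (d : ℕ) (G : SimpleGraph V)
    (g0 : V → ℕ) (S : Set V) (R : ℝ) (Δ z : ℂ) (i j : V) : ℂ :=
  if h : i ∈ ball G S R ∧ j ∈ ball G S R then
    extGreen d (G.induce (ball G S R)) (fun v => g0 v.val) Δ z ⟨i, h.1⟩ ⟨j, h.2⟩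
  else 0

/-- The quantity `Q(G,z) = (Nd)⁻¹ Σ_{i ∼ j} G^{(j)}_{ii}(z)`. -/
def Qfun {N : ℕ} (d : ℕ) (G : SimpleGraph (Fin N)) (z : ℂ) : ℂ :=
  ((N : ℂ) * (d : ℂ))⁻¹ *
    ∑ j : Fin N, ∑ i : Fin N,
      if h : G.Adj i j then
        green d (G.induce {k : Fin N | k ≠ j}) z ⟨i, h.ne⟩ ⟨i, h.ne⟩
      else 0

/-- Logarithm in base `d - 1`. -/
def logb (d : ℕ) (x : ℝ) : ℝ :=
  Real.log x / Real.log ((d : ℝ) - 1)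

/-- The radius `ℜ = (c/4) log_{d-1} N`. -/
def RR (N d : ℕ) (c : ℝ) : ℝ :=
  (c / 4) * logb d (N : ℝ)

/-- The radius `r = r₀ log_{d-1} N`. -/
def rr (N d : ℕ) (r₀ : ℝ) : ℝ :=
  r₀ * logb d (N : ℝ)

/-- The set `Ω̄(ω)` of radius-`ℜ` tree-like `d`-regular graphs. -/
def OmegaBar (N d : ℕ) (c : ℝ) (ω : ℕ) : Set (SimpleGraph (Fin N)) :=
  {G | IsRegular d G ∧
    (∀ v : Fin N, excess (G.induce (ball G {v} (RR N d c))) ≤ (ω : ℤ)) ∧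
    (Nat.card {v : Fin N // ¬ (G.induce (ball G {v} (RR N d c))).IsAcyclic} : ℝ) ≤ (N : ℝ) ^ c}

/-- The control parameter `ε₀(z)`. -/
def eps0 (N d : ℕ) (a r : ℝ) (z : ℂ) : ℝ :=
  Real.log (N : ℝ) ^ (8 * a) *
    (((d : ℝ) - 1) ^ (-r) + Real.sqrt ((mD d z).im / ((N : ℝ) * z.im)) +
      ((N : ℝ) * z.im) ^ (-(2 / 3 : ℝ)))

/-- The control parameter `ε(z)`. -/
def eps (N d : ℕ) (a r : ℝ) (z : ℂ) : ℝ :=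
  if eps0 N d a r z ≤ (kappa z + z.im) / Real.log (N : ℝ) then eps0 N d a r z
  else Real.log (N : ℝ) ^ 4 * eps0 N d a r z

/-- The set `Ω(z)` of spectrally regular graphs. -/
def OmegaSet (N d : ℕ) (c a r₀ : ℝ) (ω : ℕ) (z : ℂ) : Set (SimpleGraph (Fin N)) :=
  {G | G ∈ OmegaBar N d c ω ∧
    ‖Qfun d G z - mSC z‖ ≤
      eps N d a (rr N d r₀) z / Real.sqrt (kappa z + z.im + eps N d a (rr N d r₀) z) ∧
    ∀ i j : Fin N,
      ‖green d G z i j -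
          ballGreen d G (fun v => d - deg G v) {i, j} (rr N d r₀) (Qfun d G z) z i j‖ ≤
        eps N d a (rr N d r₀) z}

/-- The set `Ω⁻(z)`. -/
def OmegaMinus (N d : ℕ) (c a r₀ : ℝ) (ω : ℕ) (z : ℂ) : Set (SimpleGraph (Fin N)) :=
  {G | G ∈ OmegaBar N d c ω ∧
    ‖Qfun d G z - mSC z‖ ≤
      eps N d a (rr N d r₀) z / (2 * Real.sqrt (kappa z + z.im + eps N d a (rr N d r₀) z)) ∧
    ∀ i j : Fin N,
      ‖green d G z i j -
          ballGreen d G (fun v => d - deg G v) {i, j} (rr N d r₀) (Qfun d G z) z i j‖ ≤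
        eps N d a (rr N d r₀) z / 2}

/-- `(T, o)` is a depth-`k` truncated `(d-1)`-ary tree with root `o`. -/
def IsTruncAry (d k : ℕ) {V : Type} (T : SimpleGraph V) (o : V) : Prop :=
  T.IsTree ∧ (∀ v, T.dist o v ≤ k) ∧ deg T o = d - 1 ∧
    ∀ v, v ≠ o → T.dist o v < k → deg T v = d

/-- `(T, o)` is a depth-`k` truncated `d`-regular tree with root `o`. -/
def IsTruncReg (d k : ℕ) {V : Type} (T : SimpleGraph V) (o : V) : Prop :=
  T.IsTree ∧ (∀ v, T.dist o v ≤ k) ∧ ∀ v, T.dist o v < k → deg T v = d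

/-- The Kesten–McKay density. -/
def rhoD (d : ℕ) (x : ℝ) : ℝ :=
  (1 + 1 / ((d : ℝ) - 1) - x ^ 2 / (d : ℝ))⁻¹ * Real.sqrt (max (4 - x ^ 2) 0) / (2 * Real.pi)

/-- The diameter of a finite graph. -/
def gDiam {V : Type} [Fintype V] (T : SimpleGraph V) : ℕ :=
  Finset.univ.sup fun p : V × V => T.dist p.1 p.2

/-- The set of boundary edges of `s`, oriented from inside to outside. -/
def bndSet {V : Type} (G : SimpleGraph V) (s : Set V) : Set (V × V) :=
  {p | G.Adj p.1 p.2 ∧ p.1 ∈ s ∧ p.2 ∉ s}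

/-- The vertex set of the connected component of `u` in the subgraph induced on `s`. -/
def comp {V : Type} (G : SimpleGraph V) (s : Set V) (u : V) : Set V :=
  {w | ∃ (hu : u ∈ s) (hw : w ∈ s), (G.induce s).Reachable ⟨u, hu⟩ ⟨w, hw⟩}

/-- The number of neighbors of `v` inside `s`. -/
def degIn {V : Type} (G : SimpleGraph V) (s : Set V) (v : V) : ℕ :=
  Nat.card {w : V // w ∈ s ∧ G.Adj v w}

/-- The deterministic correction `δ_Q(z)`. -/
def deltaQ (N d l : ℕ) (z : ℂ) : ℂ :=
  (((d : ℂ) - 1) ^ (l + 1) - 1) * mSC z ^ (2 * l + 2) *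
    (1 + mSC z / (Real.sqrt ((d : ℝ) - 1) : ℂ)) ^ 2 *
    ((N : ℂ) * ((d : ℂ) / (Real.sqrt ((d : ℝ) - 1) : ℂ) - z))⁻¹


noncomputable section

/-- The perturbation sequence `δ_k`. -/
def del (m Δ : ℂ) : ℕ → ℂ
  | 0 => Δ - m
  | (k+1) => m^2 * del m Δ k / (1 - m * del m Δ k)

/-- `f_k = m/(1 - m δ_k)`. -/
def ff (m Δ : ℂ) (k : ℕ) : ℂ := m / (1 - m * del m Δ k)

/-- `S_k`. -/
def SS (m : ℂ) (k : ℕ) : ℂ := m^(2*k+1) * (1 - m^(2*k)) / (1 - m^2)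

lemma pow_one_add_le {t : ℝ} (ht : 0 ≤ t) :
    ∀ k : ℕ, 2*(k:ℝ)*t ≤ 1 → (1+t)^k ≤ 1 + 2*(k:ℝ)*t := by
  intro k
  induction k with
  | zero => simp
  | succ k ih =>
    intro hk
    have hk' : 2*(k:ℝ)*t ≤ 1 := by
      push_cast at hk ⊢; nlinarith
    have h1 : (1+t)^k ≤ 1 + 2*(k:ℝ)*t := ih hk'
    have h2 : (1+t)^(k+1) = (1+t)^k * (1+t) := by ring
    push_cast
    nlinarith [pow_nonneg (by linarith : (0:ℝ) ≤ 1+t) k]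

section mfacts

variable {m Δ : ℂ}

lemma del_succ_eq (k : ℕ) : del m Δ (k+1) = m^2 * del m Δ k / (1 - m * del m Δ k) := rfl

lemma del_le (hm : ‖m‖ < 1) :
    ∀ k : ℕ, 8*(k:ℝ)*‖Δ - m‖ ≤ 1 → 8*‖Δ - m‖ ≤ 1 →
      ‖del m Δ k‖ ≤ (1 + 4*‖Δ - m‖)^k * ‖Δ - m‖ := by
  intro k
  set t := ‖Δ - m‖ with hts
  have ht0 : 0 ≤ t := norm_nonneg _
  induction k with
  | zero => simp [del, hts]
  | succ k ih =>
    intro hk ht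
    have hk' : 8*(k:ℝ)*t ≤ 1 := by push_cast at hk ⊢; nlinarith
    have ihk := ih hk' ht
    have hpow : (1 + 4*t)^k ≤ 1 + 2*(k:ℝ)*(4*t) :=
      pow_one_add_le (by linarith : (0:ℝ) ≤ 4*t) k (by nlinarith)
    have h2t : ‖del m Δ k‖ ≤ 2*t := by
      calc ‖del m Δ k‖ ≤ (1 + 4*t)^k * t := ihk
        _ ≤ (1 + 2*(k:ℝ)*(4*t)) * t := by nlinarith
        _ ≤ 2*t := by nlinarith
    have hmd : ‖m * del m Δ k‖ ≤ 2*t := by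
      rw [norm_mul]
      calc ‖m‖ * ‖del m Δ k‖ ≤ 1 * (2*t) :=
            mul_le_mul (le_of_lt hm) h2t (norm_nonneg _) zero_le_one
        _ = 2*t := one_mul _
    have hden : 1 - 2*t ≤ ‖1 - m * del m Δ k‖ := by
      have h := norm_sub_norm_le (1:ℂ) (m * del m Δ k)
      rw [norm_one] at h
      linarith
    have hdenpos : (0:ℝ) < ‖1 - m * del m Δ k‖ := by
      have : (0:ℝ) < 1 - 2*t := by nlinarith
      linarith
    rw [del_succ_eq, norm_div, norm_mul, norm_pow]
    have hsq : ‖m‖ ^ 2 ≤ 1 := by nlinarith [norm_nonneg m]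
    have hstep : ‖m‖ ^2 * ‖del m Δ k‖ / ‖1 - m * del m Δ k‖
        ≤ ‖del m Δ k‖ * (1 + 4*t) := by
      rw [div_le_iff₀ hdenpos]
      set D := ‖del m Δ k‖ with hD
      have hD0 : 0 ≤ D := norm_nonneg _
      have e1 : D * (1+4*t) * (1-2*t) ≤ D * (1+4*t) * ‖1 - m * del m Δ k‖ := by
        apply mul_le_mul_of_nonneg_left hden (by positivity)
      have e2 : D ≤ D * (1+4*t) * (1-2*t) := by nlinarith [mul_nonneg (mul_nonneg hD0 ht0) (by linarith : (0:ℝ) ≤ 2 - 8*t)]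
      have e3 : ‖m‖ ^ 2 * D ≤ D := by nlinarith
      linarith
    calc ‖m‖ ^2 * ‖del m Δ k‖ / ‖1 - m * del m Δ k‖
        ≤ ‖del m Δ k‖ * (1 + 4*t) := hstep
      _ ≤ (1 + 4*t)^k * t * (1 + 4*t) := by
          have hp : (0:ℝ) ≤ 1 + 4*t := by linarith
          nlinarith
      _ = (1 + 4*t)^(k+1) * t := by ring

lemma del_le_two (hm : ‖m‖ < 1) (k : ℕ)
    (hk : 8*(k:ℝ)*‖Δ - m‖ ≤ 1) (ht : 8*‖Δ - m‖ ≤ 1) :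
    ‖del m Δ k‖ ≤ 2 * ‖Δ - m‖ := by
  set t := ‖Δ - m‖ with hts
  have ht0 : 0 ≤ t := norm_nonneg _
  have h := del_le hm k hk ht
  have hpow : (1 + 4*t)^k ≤ 1 + 2*(k:ℝ)*(4*t) :=
    pow_one_add_le (by linarith : (0:ℝ) ≤ 4*t) k (by nlinarith)
  calc ‖del m Δ k‖ ≤ (1 + 4*t)^k * t := h
    _ ≤ (1 + 2*(k:ℝ)*(4*t)) * t := by nlinarith
    _ ≤ 2*t := by nlinarith

lemma den_facts (hm : ‖m‖ < 1) (k : ℕ)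
    (hk : 8*(k:ℝ)*‖Δ - m‖ ≤ 1) (ht : 8*‖Δ - m‖ ≤ 1) :
    (1/2 : ℝ) ≤ ‖1 - m * del m Δ k‖ ∧ (1 - m * del m Δ k) ≠ 0 := by
  set t := ‖Δ - m‖ with hts
  have ht0 : 0 ≤ t := norm_nonneg _
  have h2t := del_le_two hm k hk ht
  have hmd : ‖m * del m Δ k‖ ≤ 2*t := by
    rw [norm_mul]
    calc ‖m‖ * ‖del m Δ k‖ ≤ 1 * (2*t) :=
          mul_le_mul (le_of_lt hm) h2t (norm_nonneg _) zero_le_one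
      _ = 2*t := one_mul _
  have hden : 1 - 2*t ≤ ‖1 - m * del m Δ k‖ := by
    have h := norm_sub_norm_le (1:ℂ) (m * del m Δ k)
    rw [norm_one] at h
    linarith
  constructor
  · nlinarith
  · intro h0
    rw [h0, norm_zero] at hden
    nlinarith

lemma first_order (hm : ‖m‖ < 1) :
    ∀ k : ℕ, 8*((k:ℝ)+1)*‖Δ - m‖ ≤ 1 →
      ‖del m Δ k - m^(2*k) * (Δ - m)‖ ≤ 8*(k:ℝ)*‖Δ - m‖^2 := by
  intro k
  set t := ‖Δ - m‖ with hts
  have ht0 : 0 ≤ t := norm_nonneg _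
  induction k with
  | zero => simp [del]
  | succ k ih =>
    intro hk
    have hk8 : 8*((k:ℝ))*t ≤ 1 := by push_cast at hk ⊢; nlinarith
    have hk8' : 8*((k:ℝ)+1)*t ≤ 1 := by push_cast at hk ⊢; nlinarith
    have ht8 : 8*t ≤ 1 := by push_cast at hk; nlinarith
    have ihk := ih hk8'
    have h2t := del_le_two hm k hk8 ht8
    obtain ⟨hden, hden0⟩ := den_facts hm k hk8 ht8
    -- key algebraic identity
    have key : del m Δ (k+1) - m^(2*(k+1)) * (Δ - m)
        = m^2 * (del m Δ k - m^(2*k) * (Δ - m))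
          + m^3 * (del m Δ k)^2 / (1 - m * del m Δ k) := by
      rw [del_succ_eq]
      field_simp
      ring
    rw [key]
    have habs1 : ‖m^2 * (del m Δ k - m^(2*k) * (Δ - m))‖ ≤ 8*(k:ℝ)*t^2 := by
      rw [norm_mul, norm_pow]
      calc ‖m‖ ^2 * ‖del m Δ k - m^(2*k)*(Δ-m)‖ ≤ 1 * (8*(k:ℝ)*t^2) := by
            apply mul_le_mul _ ihk (norm_nonneg _) zero_le_one
            nlinarith [norm_nonneg m]
        _ = 8*(k:ℝ)*t^2 := one_mul _
    have habs2 : ‖m^3 * (del m Δ k)^2 / (1 - m * del m Δ k)‖ ≤ 8*t^2 := by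
      rw [norm_div, norm_mul, norm_pow, norm_pow]
      rw [div_le_iff₀ (by linarith)]
      have hm3 : ‖m‖ ^3 ≤ 1 :=
        pow_le_one₀ (norm_nonneg m) (le_of_lt hm)
      nlinarith [norm_nonneg (del m Δ k), sq_nonneg (‖del m Δ k‖)]
    calc ‖_‖ ≤ ‖m^2 * (del m Δ k - m^(2*k) * (Δ - m))‖
          + ‖m^3 * (del m Δ k)^2 / (1 - m * del m Δ k)‖ := norm_add_le _ _
      _ ≤ 8*(k:ℝ)*t^2 + 8*t^2 := add_le_add habs1 habs2
      _ ≤ 8*((k:ℝ)+1)*t^2 := by nlinarith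
      _ = 8*(((k:ℕ):ℝ)+1)*t^2 := by norm_num
      _ = 8*(((k+1:ℕ)):ℝ)*t^2 := by push_cast; ring

lemma SS_succ (hm : ‖m‖ < 1) (k : ℕ) :
    SS m (k+1) = m^2 * SS m k + m^(4*k+3) := by
  have h1 : (1 : ℂ) - m^2 ≠ 0 := by
    intro h
    have : m^2 = 1 := by linear_combination -h
    have habs : ‖m^2‖ = 1 := by rw [this, norm_one]
    rw [norm_pow] at habs
    nlinarith [norm_nonneg m]
  unfold SS
  field_simp
  ring

lemma second_order (hm : ‖m‖ < 1) :
    ∀ k : ℕ, 8*((k:ℝ)+1)*‖Δ - m‖ ≤ 1 →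
      ‖del m Δ k - m^(2*k) * (Δ - m) - SS m k * (Δ - m)^2‖
        ≤ 40*(k:ℝ)^2*‖Δ - m‖^3 := by
  intro k
  set t := ‖Δ - m‖ with hts
  have ht0 : 0 ≤ t := norm_nonneg _
  induction k with
  | zero => simp [del, SS]
  | succ k ih =>
    intro hk
    have hk8 : 8*((k:ℝ))*t ≤ 1 := by push_cast at hk ⊢; nlinarith
    have hk8' : 8*((k:ℝ)+1)*t ≤ 1 := by push_cast at hk ⊢; nlinarith
    have ht8 : 8*t ≤ 1 := by push_cast at hk; nlinarith
    have ihk := ih hk8'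
    have ifo := first_order hm k hk8'
    have h2t := del_le_two hm k hk8 ht8
    obtain ⟨hden, hden0⟩ := den_facts hm k hk8 ht8
    have key : del m Δ (k+1) - m^(2*(k+1)) * (Δ - m) - SS m (k+1) * (Δ - m)^2
        = m^2 * (del m Δ k - m^(2*k) * (Δ - m) - SS m k * (Δ - m)^2)
          + m^3 * ((del m Δ k)^2 - m^(4*k) * (Δ - m)^2)
          + m^4 * (del m Δ k)^3 / (1 - m * del m Δ k) := by
      rw [del_succ_eq, SS_succ hm]
      field_simp
      ring
    rw [key]
    have hm1 : ∀ n : ℕ, ‖m^n‖ ≤ 1 := by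
      intro n
      rw [norm_pow]
      exact pow_le_one₀ (norm_nonneg m) (le_of_lt hm)
    have habs1 : ‖m^2 * (del m Δ k - m^(2*k) * (Δ - m) - SS m k * (Δ - m)^2)‖
        ≤ 40*(k:ℝ)^2*t^3 := by
      rw [norm_mul]
      calc ‖m^2‖ * ‖_‖ ≤ 1 * (40*(k:ℝ)^2*t^3) :=
            mul_le_mul (hm1 2) ihk (norm_nonneg _) zero_le_one
        _ = 40*(k:ℝ)^2*t^3 := one_mul _
    have habs2 : ‖m^3 * ((del m Δ k)^2 - m^(4*k) * (Δ - m)^2)‖ ≤ 24*(k:ℝ)*t^3 := by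
      rw [norm_mul]
      have hfac : (del m Δ k)^2 - m^(4*k) * (Δ - m)^2
          = (del m Δ k - m^(2*k) * (Δ - m)) * (del m Δ k + m^(2*k) * (Δ - m)) := by
        have : m^(4*k) = m^(2*k) * m^(2*k) := by rw [← pow_add]; ring_nf
        rw [this]; ring
      have hsum : ‖del m Δ k + m^(2*k) * (Δ - m)‖ ≤ 3*t := by
        calc ‖del m Δ k + m^(2*k) * (Δ - m)‖
            ≤ ‖del m Δ k‖ + ‖m^(2*k) * (Δ - m)‖ := norm_add_le _ _
          _ ≤ 2*t + 1*t := by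
              apply add_le_add h2t
              rw [norm_mul]
              exact mul_le_mul (hm1 _) le_rfl ht0 zero_le_one
          _ = 3*t := by ring
      rw [hfac, norm_mul]
      calc ‖m^3‖ * (‖del m Δ k - m^(2*k) * (Δ - m)‖ *
            ‖del m Δ k + m^(2*k) * (Δ - m)‖)
          ≤ 1 * ((8*(k:ℝ)*t^2) * (3*t)) := by
            apply mul_le_mul (hm1 3) _ (by positivity) zero_le_one
            apply mul_le_mul ifo hsum (norm_nonneg _) (by positivity)
        _ = 24*(k:ℝ)*t^3 := by ring
    have habs3 : ‖m^4 * (del m Δ k)^3 / (1 - m * del m Δ k)‖ ≤ 16*t^3 := by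
      rw [norm_div, norm_mul, norm_pow]
      rw [div_le_iff₀ (by linarith)]
      rw [norm_pow]
      have h3 : ‖del m Δ k‖^3 ≤ (2*t)^3 :=
        pow_le_pow_left₀ (norm_nonneg _) h2t 3
      have hm4 : ‖m‖ ^ 4 ≤ 1 := pow_le_one₀ (norm_nonneg m) (le_of_lt hm)
      have hD3 : (0:ℝ) ≤ ‖del m Δ k‖^3 := by positivity
      have e1 : ‖m‖ ^4 * ‖del m Δ k‖^3 ≤ (2*t)^3 := by nlinarith
      have e2 : (2*t)^3 ≤ 16*t^3 * (1/2) := by nlinarith [pow_nonneg ht0 3]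
      have e3 : 16*t^3 * (1/2) ≤ 16*t^3 * ‖1 - m * del m Δ k‖ := by
        apply mul_le_mul_of_nonneg_left hden (by positivity)
      linarith
    calc ‖_‖ ≤ ‖m^2 * (del m Δ k - m^(2*k) * (Δ - m) - SS m k * (Δ - m)^2)
            + m^3 * ((del m Δ k)^2 - m^(4*k) * (Δ - m)^2)‖
          + ‖m^4 * (del m Δ k)^3 / (1 - m * del m Δ k)‖ := norm_add_le _ _
      _ ≤ (‖m^2 * (del m Δ k - m^(2*k) * (Δ - m) - SS m k * (Δ - m)^2)‖
          + ‖m^3 * ((del m Δ k)^2 - m^(4*k) * (Δ - m)^2)‖) + 16*t^3 := by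
          gcongr
          exact norm_add_le _ _
      _ ≤ 40*(k:ℝ)^2*t^3 + 24*(k:ℝ)*t^3 + 16*t^3 := by
          have := add_le_add habs1 habs2
          linarith
      _ ≤ 40*((k:ℕ)+1:ℝ)^2*t^3 := by nlinarith [pow_nonneg ht0 3]
      _ = 40*(((k+1:ℕ)):ℝ)^2*t^3 := by push_cast; ring

end mfacts

end



noncomputable section MSCFacts

lemma mSC_spec (z : ℂ) (hz : 0 < z.im) :
    (mSC z)^2 + z * mSC z + 1 = 0 ∧ 0 < (mSC z).im := by
  have hex : ∃ m : ℂ, m ^ 2 + z * m + 1 = 0 ∧ 0 < m.im := by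
    obtain ⟨s, hs⟩ := IsAlgClosed.exists_pow_nat_eq (z^2 - 4) zero_lt_two
    have hr : ((-z + s)/2)^2 + z*((-z + s)/2) + 1 = 0 := by linear_combination hs/4
    set r : ℂ := (-z + s)/2 with hrdef
    have hr0 : r ≠ 0 := by
      intro h0
      rw [h0] at hr
      simp at hr
    have him : r.im ≠ 0 := by
      intro h0
      have hzeq : z = -r - r⁻¹ := by
        field_simp
        linear_combination hs/4
      have : z.im = 0 := by
        rw [hzeq]
        simp [Complex.sub_im, Complex.neg_im, Complex.inv_im, h0]
      linarith
    rcases lt_or_gt_of_ne him with hlt | hgt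
    · refine ⟨r⁻¹, ?_, ?_⟩
      · have hinv : r * r⁻¹ = 1 := mul_inv_cancel₀ hr0
        linear_combination (r⁻¹)^2 * hr - (z*r⁻¹ + 1 + r*r⁻¹) * hinv
      · rw [Complex.inv_im]
        have hn : 0 < Complex.normSq r := Complex.normSq_pos.2 hr0
        have h2 : 0 < -r.im := by linarith
        exact div_pos h2 hn
    · exact ⟨r, hr, hgt⟩
  rw [mSC, dif_pos hex]
  exact hex.choose_spec

end MSCFacts



noncomputable section Final

variable {z m Δ : ℂ}

lemma del_zero_eq : del m Δ 0 = Δ - m := rfl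

lemma ff_eq_add {k : ℕ} (h0 : 1 - m * del m Δ k ≠ 0) : ff m Δ k = m + del m Δ (k+1) := by
  rw [ff, del_succ_eq]
  field_simp
  ring

lemma ff_ne_zero {k : ℕ} (hm0 : m ≠ 0) (h0 : 1 - m * del m Δ k ≠ 0) : ff m Δ k ≠ 0 :=
  div_ne_zero hm0 h0

lemma z_ff0 (hzm : m * (z + m) = -1) (h0 : 1 - m * del m Δ 0 ≠ 0) :
    (z + Δ) * ff m Δ 0 = -1 := by
  rw [ff, del_zero_eq]
  rw [del_zero_eq] at h0
  field_simp
  linear_combination hzm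

lemma z_ffS {k : ℕ} (hzm : m * (z + m) = -1) (h0 : 1 - m * del m Δ k ≠ 0)
    (h1 : 1 - m * del m Δ (k+1) ≠ 0) : (z + ff m Δ k) * ff m Δ (k+1) = -1 := by
  rw [ff_eq_add h0, ff]
  field_simp
  linear_combination hzm

end Final



open SimpleGraph Finset

noncomputable section GraphPart

variable {W : Type} [Fintype W] [DecidableEq W]

/-- any path realizes the distance in a tree -/
lemma tree_path_length (T : SimpleGraph W) (ht : T.IsTree) {u v : W}
    (p : T.Walk u v) (hp : p.IsPath) : p.length = T.dist u v := by
  obtain ⟨q, hq⟩ := ht.isConnected.exists_walk_length_eq_dist u v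
  have hbp : q.bypass.IsPath := q.bypass_isPath
  have hup := (SimpleGraph.isAcyclic_iff_path_unique.1 ht.IsAcyclic)
  have heq : (⟨p, hp⟩ : T.Path u v) = ⟨q.bypass, hbp⟩ := hup _ _
  have hpl : p.length = q.bypass.length := by
    rw [Subtype.ext_iff] at heq
    simp only at heq
    rw [heq]
  have h1 : q.bypass.length ≤ q.length := q.length_bypass_le
  have h2 : T.dist u v ≤ p.length := SimpleGraph.dist_le p
  omega

lemma exists_path_length (T : SimpleGraph W) (ht : T.IsTree) (u v : W) :
    ∃ p : T.Walk u v, p.IsPath ∧ p.length = T.dist u v := by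
  obtain ⟨q, hq⟩ := ht.isConnected.exists_walk_length_eq_dist u v
  exact ⟨q.bypass, q.bypass_isPath, tree_path_length T ht _ q.bypass_isPath⟩

lemma dist_zero_iff (T : SimpleGraph W) (ht : T.IsTree) {o v : W} :
    T.dist o v = 0 ↔ o = v := by
  constructor
  · intro h
    exact ((ht.isConnected o v).dist_eq_zero_iff).1 h
  · rintro rfl; exact SimpleGraph.dist_self

lemma adj_dist_le (T : SimpleGraph W) {o u v : W} (ht : T.IsTree) (h : T.Adj u v) :
    T.dist o v ≤ T.dist o u + 1 := by
  have h1 : T.dist u v ≤ 1 := by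
    have := SimpleGraph.dist_le (SimpleGraph.Walk.cons h SimpleGraph.Walk.nil)
    simpa using this
  have := ht.isConnected.dist_triangle (u := o) (v := u) (w := v)
  omega

/-- in a tree, adjacent vertices have different distances to the root -/
lemma adj_dist_ne (T : SimpleGraph W) (ht : T.IsTree) {o u v : W} (h : T.Adj u v) :
    T.dist o u ≠ T.dist o v := by
  intro heq
  have hup := (SimpleGraph.isAcyclic_iff_path_unique.1 ht.IsAcyclic)
  by_cases h0 : T.dist o u = 0
  · have h1 : o = u := (dist_zero_iff T ht).1 h0
    have h2 : o = v := (dist_zero_iff T ht).1 (heq ▸ h0)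
    rw [← h1, ← h2] at h
    exact T.irrefl h
  · -- nonzero case
    have hne : u ≠ v := h.ne
    obtain ⟨p, hp, hpl⟩ := exists_path_length T ht o u
    have hvp : v ∉ p.support := by
      intro hmem
      have htake : (p.takeUntil v hmem).IsPath := hp.takeUntil hmem
      have hlen : (p.takeUntil v hmem).length = T.dist o v :=
        tree_path_length T ht _ htake
      have hle : (p.takeUntil v hmem).length ≤ p.length :=
        SimpleGraph.Walk.length_takeUntil_le p hmem
      -- then takeUntil has full length, so dropUntil has length zero, so v = u
      have hspec := SimpleGraph.Walk.take_spec p hmem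
      have hlen2 : (p.takeUntil v hmem).length + (p.dropUntil v hmem).length = p.length := by
        rw [← SimpleGraph.Walk.length_append, hspec]
      have : (p.dropUntil v hmem).length = 0 := by omega
      exact hne (SimpleGraph.Walk.eq_of_length_eq_zero this).symm
    have hq : (p.concat h).IsPath := by
      have h1 : (p.concat h).reverse.IsPath := by
        rw [SimpleGraph.Walk.reverse_concat]
        apply SimpleGraph.Walk.IsPath.cons hp.reverse
        rw [SimpleGraph.Walk.support_reverse]
        simpa using hvp
      rw [SimpleGraph.Walk.isPath_reverse_iff] at h1
      exact h1
    have : (p.concat h).length = T.dist o v := tree_path_length T ht _ hq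
    rw [SimpleGraph.Walk.length_concat] at this
    omega

lemma adj_dist_dichotomy (T : SimpleGraph W) (ht : T.IsTree) {o u v : W} (h : T.Adj u v) :
    T.dist o u + 1 = T.dist o v ∨ T.dist o v + 1 = T.dist o u := by
  have h1 := adj_dist_le T ht (o := o) h
  have h2 := adj_dist_le T ht (o := o) h.symm
  have h3 := adj_dist_ne T ht (o := o) h
  omega

lemma exists_parent (T : SimpleGraph W) (ht : T.IsTree) {o v : W} (hv : v ≠ o) :
    ∃ u, T.Adj u v ∧ T.dist o u + 1 = T.dist o v := by
  obtain ⟨p, hp, hpl⟩ := exists_path_length T ht v o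
  have hd0 : T.dist o v ≠ 0 := fun h0 => hv ((dist_zero_iff T ht).1 h0).symm
  have hdvo : T.dist v o = T.dist o v := SimpleGraph.dist_comm
  cases p with
  | nil => exact absurd rfl hv
  | cons hadj q =>
    rename_i u
    refine ⟨u, hadj.symm, ?_⟩
    have h1 : T.dist o u ≤ q.length := by
      have := SimpleGraph.dist_le q.reverse
      rwa [SimpleGraph.Walk.length_reverse] at this
    have h2 : q.length + 1 = T.dist o v := by
      have : (SimpleGraph.Walk.cons hadj q).length = q.length + 1 := rfl
      omega
    have h3 := adj_dist_le T ht (o := o) hadj.symm  -- dist o v ≤ dist o u + 1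
    omega

/-- uniqueness of the parent -/
lemma parent_unique (T : SimpleGraph W) (ht : T.IsTree) {o v u₁ u₂ : W}
    (h1 : T.Adj u₁ v) (h2 : T.Adj u₂ v)
    (d1 : T.dist o u₁ + 1 = T.dist o v) (d2 : T.dist o u₂ + 1 = T.dist o v) : u₁ = u₂ := by
  have hup := (SimpleGraph.isAcyclic_iff_path_unique.1 ht.IsAcyclic)
  have hv : ∀ (u : W) (h : T.Adj u v), T.dist o u + 1 = T.dist o v →
      ∃ (p : T.Walk o u) (hvp : v ∉ p.support) (hq : (p.concat h).IsPath), True := by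
    intro u h hd
    obtain ⟨p, hp, hpl⟩ := exists_path_length T ht o u
    have hvp : v ∉ p.support := by
      intro hmem
      have hlen : (p.takeUntil v hmem).length = T.dist o v :=
        tree_path_length T ht _ (hp.takeUntil hmem)
      have hle : (p.takeUntil v hmem).length ≤ p.length :=
        SimpleGraph.Walk.length_takeUntil_le p hmem
      omega
    have hq : (p.concat h).IsPath := by
      have h1 : (p.concat h).reverse.IsPath := by
        rw [SimpleGraph.Walk.reverse_concat]
        apply SimpleGraph.Walk.IsPath.cons hp.reverse
        rw [SimpleGraph.Walk.support_reverse]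
        simpa using hvp
      rwa [SimpleGraph.Walk.isPath_reverse_iff] at h1
    exact ⟨p, hvp, hq, trivial⟩
  obtain ⟨p₁, hvp₁, hq₁, -⟩ := hv u₁ h1 d1
  obtain ⟨p₂, hvp₂, hq₂, -⟩ := hv u₂ h2 d2
  have heq : (⟨p₁.concat h1, hq₁⟩ : T.Path o v) = ⟨p₂.concat h2, hq₂⟩ := hup _ _
  rw [Subtype.ext_iff] at heq
  simp only at heq
  obtain ⟨hv12, -⟩ := SimpleGraph.Walk.concat_inj heq
  exact hv12

end GraphPart



open SimpleGraph Finset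

noncomputable section MRow

variable {W : Type} [Fintype W] [DecidableEq W]

lemma deg_eq_card (T : SimpleGraph W) (v : W) :
    deg T v = (univ.filter (fun w => T.Adj v w)).card := by
  rw [deg, Nat.card_eq_fintype_card, Fintype.card_subtype]

lemma mulVec_ext (d : ℕ) (T : SimpleGraph W) (g : W → ℕ) (Δ z : ℂ) (x : W → ℂ) (v : W) :
    (extMatrix d T g Δ z).mulVec x v
      = ((Real.sqrt ((d:ℝ)-1) : ℂ))⁻¹ * (∑ w ∈ univ.filter (fun w => T.Adj v w), x w)
        - (z + (((d:ℂ) - (g v:ℂ) - (deg T v:ℂ)) / ((d:ℂ) - 1)) * Δ) * x v := by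
  simp only [Matrix.mulVec, dotProduct, extMatrix, normAdj, Matrix.sub_apply,
    Matrix.smul_apply, Matrix.one_apply, Matrix.diagonal_apply, Matrix.of_apply,
    smul_eq_mul, mul_ite, mul_one, mul_zero, sub_mul, ite_mul, zero_mul]
  rw [Finset.sum_sub_distrib, Finset.sum_sub_distrib, Finset.sum_ite_eq, Finset.sum_ite_eq]
  simp only [Finset.mem_univ, if_true]
  have hh : ∑ w : W, (if T.Adj v w then ((Real.sqrt ((d:ℝ)-1) : ℂ))⁻¹ * x w else 0)
      = ((Real.sqrt ((d:ℝ)-1) : ℂ))⁻¹ * (∑ w ∈ univ.filter (fun w => T.Adj v w), x w) := by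
    rw [Finset.mul_sum, Finset.sum_filter]
  rw [hh]
  ring

end MRow



open SimpleGraph Finset

noncomputable section Descent

variable {W : Type} [Fintype W] [DecidableEq W]

/-- children of `v` -/
def children (T : SimpleGraph W) (o v : W) : Finset W :=
  univ.filter (fun w => T.Adj v w ∧ T.dist o w = T.dist o v + 1)

lemma neighbors_eq_insert (T : SimpleGraph W) (ht : T.IsTree) {o v u : W}
    (hu : T.Adj u v) (hd : T.dist o u + 1 = T.dist o v) :
    univ.filter (fun w => T.Adj v w) = insert u (children T o v) ∧ u ∉ children T o v := by
  constructor
  · ext w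
    simp only [children, mem_filter, mem_univ, true_and, mem_insert]
    constructor
    · intro hw
      rcases adj_dist_dichotomy T ht (o := o) hw with hcase | hcase
      · right; exact ⟨hw, hcase.symm⟩
      · left; exact parent_unique T ht hw.symm hu (by omega) hd
    · rintro (rfl | ⟨h1, h2⟩)
      · exact hu.symm
      · exact h1
  · simp only [children, mem_filter, mem_univ, true_and, not_and]
    intro _h
    omega

lemma solve_step {A B xv xu s : ℂ} (hs : s ≠ 0) (hA : A * B = -1)
    (h : s⁻¹ * xu - A * xv = 0) : xv = -B/s * xu := by
  have h' : xu = s * (A * xv) := by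
    field_simp at h; linear_combination h
  rw [div_mul_eq_mul_div, eq_comm, div_eq_iff hs, h']
  linear_combination -xv * s * hA

lemma descent (d ℓ : ℕ) (hd : 3 ≤ d) (hℓ : 1 ≤ ℓ)
    (T : SimpleGraph W) (o : W) (ht : T.IsTree)
    (hB : ∀ v, T.dist o v ≤ ℓ)
    (hdeg : ∀ v, v ≠ o → T.dist o v < ℓ → deg T v = d)
    (g : W → ℕ) (hg : ∀ v, v ≠ o → g v = 0)
    (z Δ m : ℂ)
    (ffS : ∀ k, k < ℓ → (z + ff m Δ k) * ff m Δ (k+1) = -1)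
    (ff0 : (z + Δ) * ff m Δ 0 = -1)
    (ffne : ∀ k, k ≤ ℓ → ff m Δ k ≠ 0)
    (x : W → ℂ) (hx : ∀ w, w ≠ o → (extMatrix d T g Δ z).mulVec x w = 0) :
    ∀ n : ℕ, ∀ v u : W, T.Adj u v → T.dist o u + 1 = T.dist o v → ℓ - T.dist o v = n →
      x v = -(ff m Δ n) / ((Real.sqrt ((d:ℝ)-1) : ℂ)) * x u := by
  set s : ℂ := ((Real.sqrt ((d:ℝ)-1) : ℂ)) with hsdef
  have hdr : (3:ℝ) ≤ (d:ℝ) := by exact_mod_cast hd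
  have h0 : (0:ℝ) ≤ (d:ℝ) - 1 := by linarith
  have hs2 : s * s = (d:ℂ) - 1 := by
    rw [hsdef, show ((Real.sqrt ((d:ℝ)-1) : ℂ)) * ((Real.sqrt ((d:ℝ)-1) : ℂ))
        = ((Real.sqrt ((d:ℝ)-1) * Real.sqrt ((d:ℝ)-1) : ℝ) : ℂ) by push_cast; ring,
      Real.mul_self_sqrt h0]
    push_cast; ring
  have hd1 : (d:ℂ) - 1 ≠ 0 := by
    have : ((d:ℝ) - 1 : ℝ) ≠ 0 := by linarith
    rw [show (d:ℂ) - 1 = (((d:ℝ) - 1 : ℝ) : ℂ) by push_cast; ring]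
    exact_mod_cast Complex.ofReal_ne_zero.mpr this
  have hs0 : s ≠ 0 := by
    intro h
    rw [h, zero_mul] at hs2
    exact hd1 hs2.symm
  intro n
  induction n using Nat.strong_induction_on with
  | _ n IH =>
  intro v u huv hdv hn
  have hvo : v ≠ o := by
    intro h
    rw [h] at hdv
    have : T.dist o o = 0 := SimpleGraph.dist_self
    omega
  have hrow := hx v hvo
  rw [mulVec_ext] at hrow
  obtain ⟨hsplit, hunot⟩ := neighbors_eq_insert T ht huv hdv
  rw [hsplit, Finset.sum_insert hunot] at hrow
  have hgv : g v = 0 := hg v hvo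
  have hdvl := hB v
  by_cases hleaf : T.dist o v = ℓ
  · -- leaf case
    have hempty : children T o v = ∅ := by
      ext w
      simp only [children, mem_filter, mem_univ, true_and, notMem_empty, iff_false, not_and]
      intro _h
      have := hB w
      omega
    rw [hempty, Finset.sum_empty, add_zero] at hrow
    have hdeg1 : deg T v = 1 := by
      rw [deg_eq_card, hsplit, hempty, insert_empty_eq, card_singleton]
    rw [hdeg1, hgv] at hrow
    have hcoef : ((d:ℂ) - ((0:ℕ):ℂ) - ((1:ℕ):ℂ)) / ((d:ℂ) - 1) = 1 := by
      rw [div_eq_iff hd1]; push_cast; ring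
    rw [hcoef, one_mul] at hrow
    have hng : n = 0 := by omega
    rw [hng]
    exact solve_step hs0 ff0 hrow
  · -- internal case
    have hdvlt : T.dist o v < ℓ := by omega
    have hn1 : 1 ≤ n := by omega
    have hch : ∀ w ∈ children T o v, x w = -(ff m Δ (n-1))/s * x v := by
      intro w hw
      simp only [children, mem_filter, mem_univ, true_and] at hw
      obtain ⟨haj, hdw⟩ := hw
      have hBw := hB w
      have hwlt : n - 1 < n := by omega
      exact IH (n-1) hwlt w v haj (by omega) (by omega)
    rw [Finset.sum_congr rfl hch, Finset.sum_const] at hrow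
    have hcard : (children T o v).card = d - 1 := by
      have hdg : deg T v = d := hdeg v hvo hdvlt
      rw [deg_eq_card, hsplit, Finset.card_insert_of_notMem hunot] at hdg
      omega
    rw [hcard] at hrow
    have hdegv : deg T v = d := hdeg v hvo hdvlt
    rw [hdegv, hgv] at hrow
    have hcoef : ((d:ℂ) - ((0:ℕ):ℂ) - ((d:ℕ):ℂ)) / ((d:ℂ) - 1) = 0 := by
      rw [div_eq_iff hd1]; push_cast; ring
    rw [hcoef, zero_mul, add_zero] at hrow
    -- hrow : s⁻¹ * (x u + (d-1) • (-(ff (n-1))/s * x v)) - z * x v = 0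
    have hsmul : ((d - 1 : ℕ) : ℂ) = (d:ℂ) - 1 := by
      push_cast [Nat.cast_sub (by omega : 1 ≤ d)]
      ring
    rw [nsmul_eq_mul, hsmul] at hrow
    -- rewrite to: s⁻¹ * x u - (z + ff (n-1)) * x v = 0
    have hrow' : s⁻¹ * x u - (z + ff m Δ (n-1)) * x v = 0 := by
      have expand : s⁻¹ * (x u + ((d:ℂ) - 1) * (-(ff m Δ (n-1))/s * x v)) - z * x v
          = s⁻¹ * x u - (z + ff m Δ (n-1)) * x v := by
        rw [← hs2]
        field_simp
        ring
      rw [expand] at hrow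
      exact hrow
    have hkey : (z + ff m Δ (n-1)) * ff m Δ n = -1 := by
      have := ffS (n-1) (by omega)
      rwa [show n - 1 + 1 = n by omega] at this
    exact solve_step hs0 hkey hrow'

end Descent



open SimpleGraph Finset

noncomputable section RootPart

variable {W : Type} [Fintype W] [DecidableEq W]

lemma root_sum (d ℓ : ℕ) (hℓ : 1 ≤ ℓ)
    (T : SimpleGraph W) (o : W) (ht : T.IsTree)
    (g : W → ℕ) (z Δ m : ℂ) (x : W → ℂ)
    (hdesc : ∀ n : ℕ, ∀ v u : W, T.Adj u v → T.dist o u + 1 = T.dist o v →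
      ℓ - T.dist o v = n → x v = -(ff m Δ n) / ((Real.sqrt ((d:ℝ)-1) : ℂ)) * x u) :
    (extMatrix d T g Δ z).mulVec x o
      = ((Real.sqrt ((d:ℝ)-1) : ℂ))⁻¹ *
          ((deg T o : ℂ) * (-(ff m Δ (ℓ-1)) / ((Real.sqrt ((d:ℝ)-1) : ℂ)) * x o))
        - (z + (((d:ℂ) - (g o:ℂ) - (deg T o:ℂ)) / ((d:ℂ) - 1)) * Δ) * x o := by
  rw [mulVec_ext]
  have hval : ∀ w ∈ univ.filter (fun w => T.Adj o w),
      x w = -(ff m Δ (ℓ-1)) / ((Real.sqrt ((d:ℝ)-1) : ℂ)) * x o := by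
    intro w hw
    rw [mem_filter] at hw
    have haj : T.Adj o w := hw.2
    have hd0 : T.dist o o = 0 := SimpleGraph.dist_self
    have hdw : T.dist o w = 1 := by
      rcases adj_dist_dichotomy T ht (o := o) haj with hc | hc <;> omega
    exact hdesc (ℓ-1) w o haj (by omega) (by omega)
  rw [Finset.sum_congr rfl hval, Finset.sum_const, nsmul_eq_mul, deg_eq_card]

lemma green_core (d ℓ : ℕ) (T : SimpleGraph W) (o : W) (ht : T.IsTree)
    (g : W → ℕ) (z Δ : ℂ) (B : ℂ) (hB0 : B ≠ 0)
    (hBo : ∀ x : W → ℂ, (∀ w, w ≠ o → (extMatrix d T g Δ z).mulVec x w = 0) →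
      (extMatrix d T g Δ z).mulVec x o = B * x o)
    (hzero : ∀ x : W → ℂ, (∀ w, w ≠ o → (extMatrix d T g Δ z).mulVec x w = 0) →
      x o = 0 → x = 0) :
    IsUnit (extMatrix d T g Δ z) ∧ extGreen d T g Δ z o o = B⁻¹ := by
  set M := extMatrix d T g Δ z with hM
  have hdet : M.det ≠ 0 := by
    intro h
    obtain ⟨y, hy0, hym⟩ := Matrix.exists_mulVec_eq_zero_iff.2 h
    have hrows : ∀ w, w ≠ o → M.mulVec y w = 0 := by
      intro w _; rw [hym]; rfl
    have hroot := hBo y hrows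
    rw [hym] at hroot
    have hyo : y o = 0 := by
      have : B * y o = 0 := by rw [← hroot]; rfl
      rcases mul_eq_zero.1 this with h' | h'
      · exact absurd h' hB0
      · exact h'
    exact hy0 (hzero y hrows hyo)
  have hunit : IsUnit M := (Matrix.isUnit_iff_isUnit_det M).2 (isUnit_iff_ne_zero.2 hdet)
  refine ⟨hunit, ?_⟩
  set x : W → ℂ := M⁻¹.mulVec (Pi.single o 1) with hx
  have hMx : M.mulVec x = Pi.single o 1 := by
    rw [hx, Matrix.mulVec_mulVec, Matrix.mul_nonsing_inv M (isUnit_iff_ne_zero.2 hdet),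
      Matrix.one_mulVec]
  have hrows : ∀ w, w ≠ o → M.mulVec x w = 0 := by
    intro w hw
    rw [hMx]
    exact Pi.single_eq_of_ne hw 1
  have hroot := hBo x hrows
  rw [hMx] at hroot
  have h1 : B * x o = 1 := by
    rw [← hroot]
    simp
  have hxo : x o = B⁻¹ := by
    rw [inv_eq_one_div, eq_div_iff hB0]
    linear_combination h1
  have hgo : extGreen d T g Δ z o o = x o := by
    rw [extGreen, ← hM, hx]
    rw [Matrix.mulVec_single]
    simp
  rw [hgo, hxo]

end RootPart



open SimpleGraph Finset

noncomputable section WrapPart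

variable {W : Type} [Fintype W] [DecidableEq W]

lemma vanish (T : SimpleGraph W) (o : W) (ht : T.IsTree) (x : W → ℂ)
    (hdesc : ∀ v u : W, T.Adj u v → T.dist o u + 1 = T.dist o v → ∃ cc : ℂ, x v = cc * x u)
    (hxo : x o = 0) : x = 0 := by
  have main : ∀ k : ℕ, ∀ v : W, T.dist o v = k → x v = 0 := by
    intro k
    induction k using Nat.strong_induction_on with
    | _ k IH =>
    intro v hk
    by_cases hvo : v = o
    · rw [hvo]; exact hxo
    · obtain ⟨u, hadj, hdu⟩ := exists_parent T ht hvo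
      obtain ⟨cc, hcc⟩ := hdesc v u hadj hdu
      have hu0 : x u = 0 := IH (T.dist o u) (by omega) u rfl
      rw [hcc, hu0, mul_zero]
  funext v
  exact main (T.dist o v) v rfl

lemma ary_case (d ℓ : ℕ) (hd : 3 ≤ d) (hℓ : 1 ≤ ℓ)
    (T : SimpleGraph W) (o : W) (hT : IsTruncAry d ℓ T o) (z Δ m : ℂ)
    (ffS : ∀ k, k < ℓ → (z + ff m Δ k) * ff m Δ (k+1) = -1)
    (ff0 : (z + Δ) * ff m Δ 0 = -1)
    (ffne : ∀ k, k ≤ ℓ → ff m Δ k ≠ 0) :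
    IsUnit (extMatrix d T (fun v => if v = o then 1 else 0) Δ z) ∧
      extGreen d T (fun v => if v = o then 1 else 0) Δ z o o = ff m Δ ℓ := by
  obtain ⟨ht, hB, hdego, hdeg⟩ := hT
  set g : W → ℕ := fun v => if v = o then 1 else 0 with hgdef
  have hg : ∀ v, v ≠ o → g v = 0 := by intro v hv; simp [hgdef, hv]
  set s : ℂ := ((Real.sqrt ((d:ℝ)-1) : ℂ)) with hsdef
  have hdr : (3:ℝ) ≤ (d:ℝ) := by exact_mod_cast hd
  have h0 : (0:ℝ) ≤ (d:ℝ) - 1 := by linarith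
  have hs2 : s * s = (d:ℂ) - 1 := by
    rw [hsdef, show ((Real.sqrt ((d:ℝ)-1) : ℂ)) * ((Real.sqrt ((d:ℝ)-1) : ℂ))
        = ((Real.sqrt ((d:ℝ)-1) * Real.sqrt ((d:ℝ)-1) : ℝ) : ℂ) by push_cast; ring,
      Real.mul_self_sqrt h0]
    push_cast; ring
  have hd1 : (d:ℂ) - 1 ≠ 0 := by
    have h1 : ((d:ℝ) - 1 : ℝ) ≠ 0 := by linarith
    rw [show (d:ℂ) - 1 = (((d:ℝ) - 1 : ℝ) : ℂ) by push_cast; ring]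
    exact_mod_cast Complex.ofReal_ne_zero.mpr h1
  have hs0 : s ≠ 0 := by
    intro h; rw [h, zero_mul] at hs2; exact hd1 hs2.symm
  have hkey : (z + ff m Δ (ℓ-1)) * ff m Δ ℓ = -1 := by
    have := ffS (ℓ-1) (by omega)
    rwa [show ℓ - 1 + 1 = ℓ by omega] at this
  have hffl0 : ff m Δ ℓ ≠ 0 := ffne ℓ le_rfl
  have hiv : (ff m Δ ℓ)⁻¹ = -z - ff m Δ (ℓ-1) := by
    rw [inv_eq_one_div, div_eq_iff hffl0]
    linear_combination hkey
  have hB0 : (ff m Δ ℓ)⁻¹ ≠ 0 := inv_ne_zero hffl0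
  have hcore := green_core d ℓ T o ht g z Δ ((ff m Δ ℓ)⁻¹) hB0 ?_ ?_
  · refine ⟨hcore.1, ?_⟩
    rw [hcore.2, inv_inv]
  · -- hBo
    intro x hx
    have hdesc := descent d ℓ hd hℓ T o ht hB hdeg g hg z Δ m ffS ff0 ffne x hx
    rw [root_sum d ℓ hℓ T o ht g z Δ m x hdesc]
    have hgo : g o = 1 := by simp [hgdef]
    rw [hgo, hdego]
    have hcast : ((d - 1 : ℕ) : ℂ) = (d:ℂ) - 1 := by
      push_cast [Nat.cast_sub (by omega : 1 ≤ d)]; ring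
    rw [hcast]
    have hcoef : ((d:ℂ) - ((1:ℕ):ℂ) - ((d:ℂ) - 1)) / ((d:ℂ) - 1) = 0 := by
      rw [div_eq_iff hd1]; push_cast; ring
    rw [hcoef, zero_mul, add_zero]
    rw [hiv, ← hsdef, ← hs2]
    field_simp
    ring
  · -- hzero
    intro x hx hxo
    have hdesc := descent d ℓ hd hℓ T o ht hB hdeg g hg z Δ m ffS ff0 ffne x hx
    apply vanish T o ht x _ hxo
    intro v u hadj hdu
    exact ⟨-(ff m Δ (ℓ - T.dist o v)) / s, hdesc (ℓ - T.dist o v) v u hadj hdu rfl⟩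

lemma reg_case (d ℓ : ℕ) (hd : 3 ≤ d) (hℓ : 1 ≤ ℓ)
    (T : SimpleGraph W) (o : W) (hT : IsTruncReg d ℓ T o) (z Δ m : ℂ)
    (ffS : ∀ k, k < ℓ → (z + ff m Δ k) * ff m Δ (k+1) = -1)
    (ff0 : (z + Δ) * ff m Δ 0 = -1)
    (ffne : ∀ k, k ≤ ℓ → ff m Δ k ≠ 0)
    (hB0 : -z - (d:ℂ)/((d:ℂ)-1) * ff m Δ (ℓ-1) ≠ 0) :
    IsUnit (extMatrix d T (fun _ => 0) Δ z) ∧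
      extGreen d T (fun _ => 0) Δ z o o = (-z - (d:ℂ)/((d:ℂ)-1) * ff m Δ (ℓ-1))⁻¹ := by
  obtain ⟨ht, hB, hdegall⟩ := hT
  set g : W → ℕ := fun _ => (0:ℕ) with hgdef
  have hg : ∀ v, v ≠ o → g v = 0 := by intro v _; rfl
  have hdeg : ∀ v, v ≠ o → T.dist o v < ℓ → deg T v = d := fun v _ hv => hdegall v hv
  set s : ℂ := ((Real.sqrt ((d:ℝ)-1) : ℂ)) with hsdef
  have hdr : (3:ℝ) ≤ (d:ℝ) := by exact_mod_cast hd
  have h0 : (0:ℝ) ≤ (d:ℝ) - 1 := by linarith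
  have hs2 : s * s = (d:ℂ) - 1 := by
    rw [hsdef, show ((Real.sqrt ((d:ℝ)-1) : ℂ)) * ((Real.sqrt ((d:ℝ)-1) : ℂ))
        = ((Real.sqrt ((d:ℝ)-1) * Real.sqrt ((d:ℝ)-1) : ℝ) : ℂ) by push_cast; ring,
      Real.mul_self_sqrt h0]
    push_cast; ring
  have hd1 : (d:ℂ) - 1 ≠ 0 := by
    have h1 : ((d:ℝ) - 1 : ℝ) ≠ 0 := by linarith
    rw [show (d:ℂ) - 1 = (((d:ℝ) - 1 : ℝ) : ℂ) by push_cast; ring]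
    exact_mod_cast Complex.ofReal_ne_zero.mpr h1
  have hs0 : s ≠ 0 := by
    intro h; rw [h, zero_mul] at hs2; exact hd1 hs2.symm
  have hdego : deg T o = d := hdegall o (by rw [SimpleGraph.dist_self]; omega)
  have hcore := green_core d ℓ T o ht g z Δ (-z - (d:ℂ)/((d:ℂ)-1) * ff m Δ (ℓ-1)) hB0 ?_ ?_
  · exact hcore
  · intro x hx
    have hdesc := descent d ℓ hd hℓ T o ht hB hdeg g hg z Δ m ffS ff0 ffne x hx
    rw [root_sum d ℓ hℓ T o ht g z Δ m x hdesc]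
    have hgo : g o = 0 := rfl
    rw [hgo, hdego]
    have hcoef : ((d:ℂ) - ((0:ℕ):ℂ) - ((d:ℕ):ℂ)) / ((d:ℂ) - 1) = 0 := by
      rw [div_eq_iff hd1]; push_cast; ring
    rw [hcoef, zero_mul, add_zero]
    rw [show (d:ℂ)/((d:ℂ)-1) = (d:ℂ)/(s*s) by rw [hs2]]
    rw [← hsdef]
    field_simp
    ring
  · intro x hx hxo
    have hdesc := descent d ℓ hd hℓ T o ht hB hdeg g hg z Δ m ffS ff0 ffne x hx
    apply vanish T o ht x _ hxo
    intro v u hadj hdu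
    exact ⟨-(ff m Δ (ℓ - T.dist o v)) / s, hdesc (ℓ - T.dist o v) v u hadj hdu rfl⟩

end WrapPart



open SimpleGraph

set_option maxHeartbeats 2000000

/-- stability of `X_ℓ` and `Y_ℓ` around the fixed point `m_sc(z)`.
`X_ℓ(Δ,z)` (resp. `Y_ℓ(Δ,z)`) is represented by the `(o,o)` entry of the Green's function
of the extension of any depth-`ℓ` truncated `d`-regular (resp. `(d-1)`-ary) tree. -/
theorem statement12 (d : ℕ) (hd : 3 ≤ d) :
    ∃ c₀ C : ℝ, 0 < c₀ ∧
      ∀ z : ℂ, 0 < z.im → ∀ ℓ : ℕ, 1 ≤ ℓ → ∀ Δ : ℂ,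
        (ℓ : ℝ) * ‖Δ - mSC z‖ ≤ c₀ →
          (∀ (W : Type) [Fintype W] [DecidableEq W] (T : SimpleGraph W) (o : W),
            IsTruncReg d ℓ T o →
              IsUnit (extMatrix d T (fun _ => 0) Δ z) ∧
                ‖extGreen d T (fun _ => 0) Δ z o o - mD d z -
                    (d : ℂ) / ((d : ℂ) - 1) * mD d z ^ 2 * mSC z ^ (2 * ℓ) * (Δ - mSC z)‖ ≤
                  C * (ℓ : ℝ) * ‖Δ - mSC z‖ ^ 2) ∧
          ∀ (W : Type) [Fintype W] [DecidableEq W] (T : SimpleGraph W) (o : W),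
            IsTruncAry d ℓ T o →
              IsUnit (extMatrix d T (fun v => if v = o then 1 else 0) Δ z) ∧
                ‖extGreen d T (fun v => if v = o then 1 else 0) Δ z o o - mSC z -
                    mSC z ^ (2 * ℓ + 2) * (Δ - mSC z) -
                    mSC z ^ (2 * ℓ + 3) * ((1 - mSC z ^ (2 * ℓ + 2)) / (1 - mSC z ^ 2)) *
                      (Δ - mSC z) ^ 2‖ ≤
                  C * (ℓ : ℝ) ^ 2 * ‖Δ - mSC z‖ ^ 3 := by
  refine ⟨1/32, 200, by norm_num, ?_⟩
  intro z hz ℓ hℓ Δ hΔ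
  obtain ⟨hroot, him⟩ := mSC_spec z hz
  set m := mSC z with hmm
  have hm0 : m ≠ 0 := by
    intro h
    rw [h] at hroot
    simp at hroot
  have hzm : m * (z + m) = -1 := by linear_combination hroot
  -- |m| < 1
  have hzeq : z = -m - m⁻¹ := by
    field_simp
    linear_combination hroot
  have hnormlt : Complex.normSq m < 1 := by
    have hzim : z.im = -m.im + m.im / Complex.normSq m := by
      rw [hzeq]
      simp [Complex.sub_im, Complex.neg_im, Complex.inv_im]
      ring
    have hN : 0 < Complex.normSq m := Complex.normSq_pos.2 hm0
    by_contra hge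
    push_neg at hge
    have h1 : m.im / Complex.normSq m ≤ m.im := by
      rw [div_le_iff₀ hN]
      nlinarith
    nlinarith
  have habs : ‖m‖ < 1 := by
    have h1 : ‖m‖ ^ 2 = Complex.normSq m := Complex.sq_norm m
    nlinarith [norm_nonneg m]
  -- small parameters
  set t := ‖Δ - m‖ with htdef
  have ht0 : 0 ≤ t := norm_nonneg _
  have hℓr : (1:ℝ) ≤ (ℓ:ℝ) := by exact_mod_cast hℓ
  have hℓt : (ℓ:ℝ) * t ≤ 1/32 := hΔ
  have htle : t ≤ 1/32 := by nlinarith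
  have ht8 : 8 * t ≤ 1 := by nlinarith
  have h8 : ∀ k : ℕ, k ≤ ℓ + 1 → 8 * (k:ℝ) * t ≤ 1 := by
    intro k hk
    have hkr : (k:ℝ) ≤ (ℓ:ℝ) + 1 := by exact_mod_cast hk
    nlinarith
  have hden0 : ∀ k : ℕ, k ≤ ℓ + 1 → 1 - m * del m Δ k ≠ 0 := by
    intro k hk
    exact (den_facts habs k (h8 k hk) ht8).2
  have ffne : ∀ k, k ≤ ℓ → ff m Δ k ≠ 0 := fun k hk =>
    ff_ne_zero hm0 (hden0 k (by omega))
  have ffS : ∀ k, k < ℓ → (z + ff m Δ k) * ff m Δ (k+1) = -1 := fun k hk =>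
    z_ffS hzm (hden0 k (by omega)) (hden0 (k+1) (by omega))
  have ff0 : (z + Δ) * ff m Δ 0 = -1 := z_ff0 hzm (hden0 0 (by omega))
  -- cast facts about d
  have hdr : (3:ℝ) ≤ (d:ℝ) := by exact_mod_cast hd
  have hd1 : (d:ℂ) - 1 ≠ 0 := by
    rw [show (d:ℂ) - 1 = (((d:ℝ) - 1 : ℝ) : ℂ) by push_cast; ring]
    exact Complex.ofReal_ne_zero.mpr (by linarith)
  have habsd1 : ‖(d:ℂ) - 1‖ = (d:ℝ) - 1 := by
    rw [show (d:ℂ) - 1 = (((d:ℝ) - 1 : ℝ) : ℂ) by push_cast; ring, Complex.norm_real, Real.norm_eq_abs]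
    exact abs_of_nonneg (by linarith)
  have habsdd : ‖(d:ℂ)/((d:ℂ)-1)‖ ≤ 3/2 := by
    rw [norm_div, habsd1, Complex.norm_natCast]
    rw [div_le_iff₀ (by linarith)]
    linarith
  constructor
  · -- regular tree part
    intro W _ _ T o hT
    set w : ℂ := -z - (d:ℂ) * m / ((d:ℂ) - 1) with hwdef
    set u : ℂ := (d:ℂ)/((d:ℂ)-1) * del m Δ ℓ with hudef
    clear_value u
    have hffl1 : ff m Δ (ℓ-1) = m + del m Δ ℓ := by
      have h := ff_eq_add (m := m) (Δ := Δ) (k := ℓ-1) (hden0 (ℓ-1) (by omega))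
      rwa [show ℓ - 1 + 1 = ℓ by omega] at h
    have hBwu : -z - (d:ℂ)/((d:ℂ)-1) * ff m Δ (ℓ-1) = w - u := by
      rw [hffl1, hwdef, hudef]
      field_simp
      ring
    -- |w| ≥ 1/2
    have hwalt : w = m⁻¹ - m/((d:ℂ)-1) := by
      rw [hwdef]
      field_simp
      linear_combination ((d:ℂ)-1) * hroot + (d:ℂ)*(1-(d:ℂ)) * hroot + ((d:ℂ)-1)*((d:ℂ)-2) * hroot
    have habsminv : (1:ℝ) ≤ ‖m⁻¹‖ := by
      rw [norm_inv]
      rw [le_inv_comm₀ (by norm_num) (norm_pos_iff.mpr hm0)]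
      linarith
    have habsmd : ‖m/((d:ℂ)-1)‖ ≤ 1/2 := by
      rw [norm_div, habsd1]
      rw [div_le_iff₀ (by linarith)]
      nlinarith [norm_nonneg m]
    have hwlb : (1/2:ℝ) ≤ ‖w‖ := by
      have h := norm_sub_norm_le m⁻¹ (m/((d:ℂ)-1))
      rw [← hwalt] at h
      linarith
    have hw0 : w ≠ 0 := by
      intro h
      rw [h, norm_zero] at hwlb
      norm_num at hwlb
    have habsdel : ‖del m Δ ℓ‖ ≤ 2 * t := del_le_two habs ℓ (h8 ℓ (by omega)) ht8
    have habsu : ‖u‖ ≤ 3 * t := by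
      rw [hudef, norm_mul]
      calc ‖(d:ℂ)/((d:ℂ)-1)‖ * ‖del m Δ ℓ‖ ≤ (3/2) * (2*t) := by
            apply mul_le_mul habsdd habsdel (norm_nonneg _) (by norm_num)
        _ = 3 * t := by ring
    have hBlb : (13/32:ℝ) ≤ ‖w - u‖ := by
      have h := norm_sub_norm_le w u
      have : 3 * t ≤ 3/32 := by linarith
      linarith
    have hB0 : -z - (d:ℂ)/((d:ℂ)-1) * ff m Δ (ℓ-1) ≠ 0 := by
      rw [hBwu]
      intro h
      rw [h, norm_zero] at hBlb
      norm_num at hBlb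
    have hwu0 : w - u ≠ 0 := by rw [← hBwu]; exact hB0
    obtain ⟨hunit, hgreen⟩ := reg_case d ℓ hd hℓ T o hT z Δ m ffS ff0 ffne hB0
    refine ⟨hunit, ?_⟩
    rw [hgreen, hBwu]
    have hmD : mD d z = w⁻¹ := by rw [mD, ← hmm, hwdef]
    rw [hmD]
    -- decompose
    have hsplit : (w - u)⁻¹ - w⁻¹ - (d:ℂ)/((d:ℂ)-1) * (w⁻¹)^2 * m^(2*ℓ) * (Δ - m)
        = (u * u * (w⁻¹ * w⁻¹ * (w-u)⁻¹))
          + (w⁻¹ * w⁻¹ * ((d:ℂ)/((d:ℂ)-1) * (del m Δ ℓ - m^(2*ℓ) * (Δ - m)))) := by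
      have hid : (w-u)⁻¹ - w⁻¹ - w⁻¹ * w⁻¹ * u = u * u * (w⁻¹ * w⁻¹ * (w-u)⁻¹) := by
        field_simp
        ring
      have hu2 : w⁻¹ * w⁻¹ * u = w⁻¹ * w⁻¹ * ((d:ℂ)/((d:ℂ)-1) * del m Δ ℓ) := by rw [hudef]
      rw [← hid]
      rw [hu2]
      ring
    rw [hsplit]
    have habswi : ‖w⁻¹‖ ≤ 2 := by
      rw [norm_inv]
      calc (‖w‖)⁻¹ ≤ (1/2:ℝ)⁻¹ := by
            apply inv_anti₀ (by norm_num) hwlb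
        _ = 2 := by norm_num
    have habswui : ‖(w-u)⁻¹‖ ≤ 3 := by
      rw [norm_inv]
      calc (‖w-u‖)⁻¹ ≤ (13/32:ℝ)⁻¹ := by
            apply inv_anti₀ (by norm_num) hBlb
        _ ≤ 3 := by norm_num
    have hfo : ‖del m Δ ℓ - m^(2*ℓ) * (Δ - m)‖ ≤ 8*(ℓ:ℝ)*t^2 := by
      apply first_order habs ℓ
      have : ((ℓ:ℝ)+1) ≤ 2*(ℓ:ℝ) := by linarith
      nlinarith
    have hterm1 : ‖u * u * (w⁻¹ * w⁻¹ * (w-u)⁻¹)‖ ≤ 108 * t^2 := by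
      rw [norm_mul, norm_mul, norm_mul, norm_mul]
      calc ‖u‖ * ‖u‖ *
            (‖w⁻¹‖ * ‖w⁻¹‖ * ‖(w-u)⁻¹‖)
          ≤ (3*t) * (3*t) * (2 * 2 * 3) := by
            apply mul_le_mul
            · apply mul_le_mul habsu habsu (norm_nonneg _) (by positivity)
            · apply mul_le_mul
              · apply mul_le_mul habswi habswi (norm_nonneg _) (by norm_num)
              · exact habswui
              · exact norm_nonneg _
              · norm_num
            · positivity
            · positivity
        _ = 108 * t^2 := by ring
    have hterm2 : ‖w⁻¹ * w⁻¹ * ((d:ℂ)/((d:ℂ)-1) * (del m Δ ℓ - m^(2*ℓ) * (Δ - m)))‖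
        ≤ 48 * (ℓ:ℝ) * t^2 := by
      simp only [norm_mul]
      calc ‖w⁻¹‖ * ‖w⁻¹‖ *
            (‖(d:ℂ)/((d:ℂ)-1)‖ * ‖del m Δ ℓ - m^(2*ℓ) * (Δ - m)‖)
          ≤ 2 * 2 * ((3/2) * (8*(ℓ:ℝ)*t^2)) := by
            apply mul_le_mul
            · apply mul_le_mul habswi habswi (norm_nonneg _) (by norm_num)
            · apply mul_le_mul habsdd hfo (norm_nonneg _) (by norm_num)
            · positivity
            · norm_num
        _ = 48 * (ℓ:ℝ) * t^2 := by ring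
    calc ‖_‖ ≤ ‖u * u * (w⁻¹ * w⁻¹ * (w-u)⁻¹)‖
          + ‖w⁻¹ * w⁻¹ * ((d:ℂ)/((d:ℂ)-1) * (del m Δ ℓ - m^(2*ℓ) * (Δ - m)))‖ :=
        norm_add_le _ _
      _ ≤ 108 * t^2 + 48 * (ℓ:ℝ) * t^2 := add_le_add hterm1 hterm2
      _ ≤ 200 * (ℓ:ℝ) * t^2 := by nlinarith
  · -- ary tree part
    intro W _ _ T o hT
    obtain ⟨hunit, hgreen⟩ := ary_case d ℓ hd hℓ T o hT z Δ m ffS ff0 ffne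
    refine ⟨hunit, ?_⟩
    have hffl : ff m Δ ℓ = m + del m Δ (ℓ+1) := ff_eq_add (hden0 ℓ (by omega))
    have hSS : SS m (ℓ+1) = m^(2*ℓ+3) * ((1 - m^(2*ℓ+2)) / (1 - m^2)) := by
      rw [SS, show 2*(ℓ+1)+1 = 2*ℓ+3 by ring, show 2*(ℓ+1) = 2*ℓ+2 by ring]
      ring
    have hexpr : extGreen d T (fun v => if v = o then 1 else 0) Δ z o o - m -
          m ^ (2 * ℓ + 2) * (Δ - m) -
          m ^ (2 * ℓ + 3) * ((1 - m ^ (2 * ℓ + 2)) / (1 - m ^ 2)) * (Δ - m) ^ 2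
        = del m Δ (ℓ+1) - m^(2*(ℓ+1)) * (Δ - m) - SS m (ℓ+1) * (Δ - m)^2 := by
      rw [hgreen, hffl, hSS, show 2*(ℓ+1) = 2*ℓ+2 by ring]
      ring
    rw [hexpr]
    have hso := second_order habs (ℓ+1) (by
      push_cast
      have : ((ℓ:ℝ)+1+1) ≤ 3*(ℓ:ℝ) := by linarith
      nlinarith)
    apply le_trans hso
    push_cast
    have h40 : 40*((ℓ:ℝ)+1)^2 ≤ 200*(ℓ:ℝ)^2 := by nlinarith
    nlinarith [pow_nonneg ht0 3, mul_le_mul_of_nonneg_right h40 (pow_nonneg ht0 3)]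


end Paper
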